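/- For real r ≠ ±1 and s ≠ ±1 with rs ≠ 1, the inequality Φ(rs) ≤ Φ̃(r) + Φ̃(s) holds, where Φ(r) = (1/2)·((r+1)/(r-1))·log(r²) and Φ̃(r) = (1/2)·((r²+1)/(r²-1))·log(r²). Equality holds if and only if r = s. -/

import Mathlib

open Real

/-- Φ(r) = (1/2)·((r+1)/(r-1))·log(r²), with limiting value Φ(1) = 2. -/
noncomputable def Phi (r : ℝ) : ℝ :=
  if r = 1 then 2 else (1 / 2) * ((r + 1) / (r - 1)) * Real.log (r ^ 2)

/-- Φ̃(r) = (1/2)·((r²+1)/(r²-1))·log(r²), with limiting values Φ̃(±1) = 1. -/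
noncomputable def PhiTilde (r : ℝ) : ℝ :=
  if r = 1 ∨ r = -1 then 1 else (1 / 2) * ((r ^ 2 + 1) / (r ^ 2 - 1)) * Real.log (r ^ 2)

noncomputable def gfun (x : ℝ) : ℝ := x * Real.log (x ^ 2) / (x ^ 2 - 1)

lemma sq_sub_one_ne {x : ℝ} (h1 : x ≠ 1) (h2 : x ≠ -1) : x ^ 2 - 1 ≠ 0 := by
  intro h
  have hf : (x - 1) * (x + 1) = 0 := by nlinarith
  rcases mul_eq_zero.1 hf with h | h
  · exact h1 (by linarith)
  · exact h2 (by linarith)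

/-- Padé inequality: log y < 2(y-1)/(y+1) for 0 < y < 1. -/
lemma log_lt_pade {y : ℝ} (h0 : 0 < y) (h1 : y < 1) :
    Real.log y < 2 * (y - 1) / (y + 1) := by
  set h : ℝ → ℝ := fun y => 2 * (y - 1) / (y + 1) - Real.log y with hh
  have key : StrictAntiOn h (Set.Ioc 0 1) := by
    apply strictAntiOn_of_deriv_neg (convex_Ioc 0 1)
    · intro x hx
      have hx0 : (0 : ℝ) < x := hx.1
      apply ContinuousAt.continuousWithinAt
      apply ContinuousAt.sub
      · exact ContinuousAt.div (by fun_prop) (by fun_prop) (by positivity)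
      · exact Real.continuousAt_log hx0.ne'
    · intro x hx
      rw [interior_Ioc] at hx
      obtain ⟨hx0, hx1⟩ := hx
      have hne : x + 1 ≠ 0 := by positivity
      have hd : HasDerivAt h
          ((2 * 1 * (x + 1) - 2 * (x - 1) * 1) / (x + 1) ^ 2 - x⁻¹) x := by
        apply HasDerivAt.sub
        · exact (((hasDerivAt_id x).sub_const 1).const_mul 2).div
            ((hasDerivAt_id x).add_const 1) hne
        · exact Real.hasDerivAt_log hx0.ne'
      rw [hd.deriv]
      have h4 : (2 * 1 * (x + 1) - 2 * (x - 1) * 1) / (x + 1) ^ 2 < x⁻¹ := by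
        rw [div_lt_iff₀ (by positivity), inv_mul_eq_div, lt_div_iff₀ hx0]
        nlinarith
      linarith
  have h01 : (1 : ℝ) ∈ Set.Ioc (0 : ℝ) 1 := ⟨one_pos, le_refl 1⟩
  have hy : y ∈ Set.Ioc (0 : ℝ) 1 := ⟨h0, h1.le⟩
  have := key hy h01 h1
  simp only [hh, Real.log_one, sub_self, sub_zero] at this
  linarith [this]

lemma gfun_mono : StrictMonoOn gfun (Set.Ioo (0 : ℝ) 1) := by
  apply strictMonoOn_of_deriv_pos (convex_Ioo 0 1)
  · intro x hx
    obtain ⟨hx0, hx1⟩ := hx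
    apply ContinuousAt.continuousWithinAt
    apply ContinuousAt.div
    · exact ContinuousAt.mul continuousAt_id
        ((Real.continuousAt_log (by positivity)).comp (by fun_prop))
    · fun_prop
    · have := sq_sub_one_ne (x := x) (by linarith) (by linarith)
      exact this
  · intro x hx
    rw [interior_Ioo] at hx
    obtain ⟨hx0, hx1⟩ := hx
    have hx2 : (0 : ℝ) < x ^ 2 := by positivity
    have hden : x ^ 2 - 1 ≠ 0 := sq_sub_one_ne (by linarith) (by linarith)
    have hd : HasDerivAt gfun
        (((1 * Real.log (x ^ 2) + x * ((↑2 * x ^ 1) / x ^ 2)) * (x ^ 2 - 1)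
          - x * Real.log (x ^ 2) * (↑2 * x ^ 1)) / (x ^ 2 - 1) ^ 2) x := by
      apply HasDerivAt.div
      · exact (hasDerivAt_id x).mul ((hasDerivAt_pow 2 x).log hx2.ne')
      · exact (hasDerivAt_pow 2 x).sub_const 1
      · exact hden
    rw [hd.deriv]
    apply div_pos
    · have hy0 : (0 : ℝ) < x ^ 2 := hx2
      have hy1 : x ^ 2 < 1 := by nlinarith
      have hL : Real.log (x ^ 2) < 2 * (x ^ 2 - 1) / (x ^ 2 + 1) := log_lt_pade hy0 hy1
      have hL2 : Real.log (x ^ 2) * (x ^ 2 + 1) < 2 * (x ^ 2 - 1) := by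
        rw [← lt_div_iff₀ (by positivity)]
        exact hL
      have hxx : x * ((↑(2 : ℕ) * x ^ 1) / x ^ 2) = 2 := by
        field_simp
        ring
      push_cast at hxx ⊢
      rw [hxx]
      nlinarith [hL2]
    · positivity

lemma gfun_inv {x : ℝ} (h0 : x ≠ 0) (h1 : x ≠ 1) (h2 : x ≠ -1) :
    gfun x⁻¹ = gfun x := by
  have hden : x ^ 2 - 1 ≠ 0 := sq_sub_one_ne h1 h2
  unfold gfun
  rw [inv_pow, Real.log_inv]
  rw [div_eq_div_iff]
  · field_simp
    ring
  · intro h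
    apply hden
    have hx2 : (x ^ 2)⁻¹ = 1 := by linarith
    have : x ^ 2 = 1 := by
      field_simp at hx2
      linarith
    linarith
  · exact hden

lemma gfun_neg (x : ℝ) : gfun (-x) = -gfun x := by
  unfold gfun
  rw [neg_pow]
  ring_nf

lemma gfun_pos {x : ℝ} (h0 : 0 < x) (h1 : x ≠ 1) : 0 < gfun x := by
  unfold gfun
  rcases lt_or_gt_of_ne h1 with h | h
  · have hx2 : x ^ 2 < 1 := by nlinarith
    have hlog : Real.log (x ^ 2) < 0 := Real.log_neg (by positivity) hx2
    have hnum : x * Real.log (x ^ 2) < 0 := mul_neg_of_pos_of_neg h0 hlog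
    exact div_pos_of_neg_of_neg hnum (by linarith)
  · have hx2 : 1 < x ^ 2 := by nlinarith
    have hlog : 0 < Real.log (x ^ 2) := Real.log_pos hx2
    exact div_pos (mul_pos h0 hlog) (by linarith)

lemma gfun_zero : gfun 0 = 0 := by simp [gfun]

/-- Core positive case: for 0 < a < b with a,b ≠ 1, ab ≠ 1,
(g a - g b) and (ab - 1) have the same sign. -/
lemma core_pos {a b : ℝ} (ha0 : 0 < a) (hab : a < b) (ha1 : a ≠ 1) (hb1 : b ≠ 1)
    (hab1 : a * b ≠ 1) : 0 < (gfun a - gfun b) * (a * b - 1) := by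
  have hb0 : 0 < b := lt_trans ha0 hab
  rcases lt_or_gt_of_ne hab1 with h | h
  · -- ab < 1 : g a < g b
    have hlt : gfun a < gfun b := by
      rcases lt_or_gt_of_ne hb1 with hb | hb
      · exact gfun_mono ⟨ha0, lt_trans hab hb⟩ ⟨hb0, hb⟩ hab
      · have hmem : a < 1 / b := (lt_div_iff₀ hb0).2 (by linarith)
        have hb' : 1 / b < 1 := by
          rw [div_lt_one hb0]; exact hb
        have := gfun_mono ⟨ha0, by linarith⟩
          ⟨by positivity, hb'⟩ hmem
        rwa [one_div, gfun_inv hb0.ne' hb1 (by linarith)] at this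
    have h2 : a * b - 1 < 0 := by linarith
    exact mul_pos_of_neg_of_neg (by linarith) h2
  · -- ab > 1 : g b < g a
    have hlt : gfun b < gfun a := by
      rcases lt_or_gt_of_ne ha1 with ha | ha
      · -- a < 1, so b > 1 and 1/b < a
        have hb : 1 < b := by nlinarith
        have hmem : 1 / b < a := by
          rw [div_lt_iff₀ hb0]; linarith [h]
        have h1b : (0:ℝ) < 1 / b := by positivity
        have := gfun_mono ⟨h1b, by linarith⟩ ⟨ha0, ha⟩ hmem
        rwa [one_div, gfun_inv hb0.ne' hb1 (by linarith)] at this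
      · -- 1 < a < b : use 1/b < 1/a < 1
        have hb : 1 < b := lt_trans ha hab
        have hmem : 1 / b < 1 / a := by
          apply div_lt_div_of_pos_left one_pos ha0 hab
        have h1a : 1 / a < 1 := by rw [div_lt_one ha0]; exact ha
        have h1b : (0:ℝ) < 1 / b := by positivity
        have := gfun_mono ⟨h1b, by linarith⟩
          ⟨by positivity, h1a⟩ hmem
        rwa [one_div, one_div, gfun_inv hb0.ne' hb1 (by linarith),
          gfun_inv ha0.ne' ha1 (by linarith)] at this
    exact mul_pos (by linarith) (by linarith)

/-- Key lemma for ordered arguments. -/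
lemma keyE' {r s : ℝ} (hr1 : r ≠ 1) (hr2 : r ≠ -1) (hs1 : s ≠ 1) (hs2 : s ≠ -1)
    (hrs : r * s ≠ 1) (hlt : r < s) :
    0 < (s - r) * (gfun r - gfun s) * (r * s - 1) := by
  rcases lt_trichotomy r 0 with hr0 | hr0 | hr0
  · rcases lt_trichotomy s 0 with hs0 | hs0 | hs0
    · -- both negative : a = -s, b = -r, 0 < a < b
      have hcore : 0 < (gfun (-s) - gfun (-r)) * ((-s) * (-r) - 1) := by
        apply core_pos (by linarith) (by linarith)
        · intro h; exact hs2 (by linarith)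
        · intro h; exact hr2 (by linarith)
        · intro h; apply hrs; nlinarith
      rw [gfun_neg, gfun_neg] at hcore
      have hE : (s - r) * (gfun r - gfun s) * (r * s - 1)
          = (s - r) * ((-gfun s - -gfun r) * (-s * -r - 1)) := by ring
      rw [hE]
      exact mul_pos (by linarith) hcore
    · -- s = 0 : expression = (−r)(g r)(−1) = r * g r > 0
      subst hs0
      have hgr : gfun (-r) > 0 := gfun_pos (by linarith) (fun h => hr2 (by linarith))
      rw [gfun_neg] at hgr
      rw [gfun_zero]
      have : (0 - r) * (gfun r - 0) * (r * 0 - 1) = r * gfun r := by ring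
      rw [this]
      exact mul_pos_of_neg_of_neg hr0 (by linarith)
    · -- r < 0 < s
      have hgs : 0 < gfun s := gfun_pos hs0 hs1
      have hgr : gfun r < 0 := by
        have := gfun_pos (x := -r) (by linarith) (fun h => hr2 (by linarith))
        rw [gfun_neg] at this; linarith
      have h1 : r * s - 1 < 0 := by nlinarith
      have h2 : gfun r - gfun s < 0 := by linarith
      have := mul_pos_of_neg_of_neg h2 h1
      have hE : (s - r) * (gfun r - gfun s) * (r * s - 1)
          = (s - r) * ((gfun r - gfun s) * (r * s - 1)) := by ring
      rw [hE]
      exact mul_pos (by linarith) this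
  · -- r = 0 : expression = s * g s
    subst hr0
    have hs0 : 0 < s := hlt
    have hgs : 0 < gfun s := gfun_pos hs0 hs1
    rw [gfun_zero]
    have : (s - 0) * (0 - gfun s) * (0 * s - 1) = s * gfun s := by ring
    rw [this]
    exact mul_pos hs0 hgs
  · -- 0 < r < s
    have hcore := core_pos hr0 hlt hr1 hs1 hrs
    have hE : (s - r) * (gfun r - gfun s) * (r * s - 1)
        = (s - r) * ((gfun r - gfun s) * (r * s - 1)) := by ring
    rw [hE]
    exact mul_pos (by linarith) hcore

lemma keyE {r s : ℝ} (hr1 : r ≠ 1) (hr2 : r ≠ -1) (hs1 : s ≠ 1) (hs2 : s ≠ -1)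
    (hrs : r * s ≠ 1) (hne : r ≠ s) :
    0 < (s - r) * (gfun r - gfun s) * (r * s - 1) := by
  rcases lt_or_gt_of_ne hne with h | h
  · exact keyE' hr1 hr2 hs1 hs2 hrs h
  · have := keyE' hs1 hs2 hr1 hr2 (by rwa [mul_comm]) h
    nlinarith [this]

lemma phiTilde_pos {s : ℝ} (hs0 : s ≠ 0) (hs1 : s ≠ 1) (hs2 : s ≠ -1) :
    0 < PhiTilde s := by
  unfold PhiTilde
  rw [if_neg (not_or.2 ⟨hs1, hs2⟩)]
  have hs2' : (0:ℝ) < s ^ 2 := by positivity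
  rcases lt_trichotomy (s ^ 2) 1 with h | h | h
  · have hlog : Real.log (s ^ 2) < 0 := Real.log_neg hs2' h
    have hr : (s ^ 2 + 1) / (s ^ 2 - 1) < 0 :=
      div_neg_of_pos_of_neg (by positivity) (by linarith)
    nlinarith [mul_pos_of_neg_of_neg hr hlog]
  · exact absurd h (sq_sub_one_ne hs1 hs2 ∘ by intro hh; linarith)
  · have hlog : 0 < Real.log (s ^ 2) := Real.log_pos h
    have hr : 0 < (s ^ 2 + 1) / (s ^ 2 - 1) := div_pos (by positivity) (by linarith)
    nlinarith [mul_pos hr hlog]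

lemma phiTilde_zero : PhiTilde 0 = 0 := by
  unfold PhiTilde
  norm_num

/-- For real `r ≠ ±1`, `s ≠ ±1` with `r*s ≠ 1`, one has `Φ(rs) ≤ Φ̃(r) + Φ̃(s)`,
with equality if and only if `r = s`. -/
theorem phi_subadditive (r s : ℝ) (hr1 : r ≠ 1) (hr2 : r ≠ -1)
    (hs1 : s ≠ 1) (hs2 : s ≠ -1) (hrs : r * s ≠ 1) :
    Phi (r * s) ≤ PhiTilde r + PhiTilde s ∧
      (Phi (r * s) = PhiTilde r + PhiTilde s ↔ r = s) := by
  by_cases hr0 : r = 0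
  · subst hr0
    have hP : Phi (0 * s) = 0 := by
      unfold Phi
      rw [zero_mul, if_neg (by norm_num)]
      norm_num
    rw [hP, phiTilde_zero, zero_add]
    by_cases hs0 : s = 0
    · subst hs0
      rw [phiTilde_zero]
      exact ⟨le_refl 0, by simp⟩
    · have hpos := phiTilde_pos hs0 hs1 hs2
      refine ⟨le_of_lt hpos, ?_, ?_⟩
      · intro h; linarith
      · intro h; exact absurd h.symm hs0
  by_cases hs0 : s = 0
  · subst hs0
    have hP : Phi (r * 0) = 0 := by
      unfold Phi
      rw [mul_zero, if_neg (by norm_num)]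
      norm_num
    rw [hP, phiTilde_zero, add_zero]
    have hpos := phiTilde_pos hr0 hr1 hr2
    refine ⟨le_of_lt hpos, ?_, ?_⟩
    · intro h; linarith
    · intro h; exact absurd h hr0
  -- main case : r, s ≠ 0
  have hrden : r ^ 2 - 1 ≠ 0 := sq_sub_one_ne hr1 hr2
  have hsden : s ^ 2 - 1 ≠ 0 := sq_sub_one_ne hs1 hs2
  have hrsden : r * s - 1 ≠ 0 := sub_ne_zero.2 hrs
  have hlog : Real.log ((r * s) ^ 2) = Real.log (r ^ 2) + Real.log (s ^ 2) := by
    rw [mul_pow, Real.log_mul (pow_ne_zero _ hr0) (pow_ne_zero _ hs0)]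
  have hd : PhiTilde r + PhiTilde s - Phi (r * s)
      = ((s - r) * (gfun r - gfun s) * (r * s - 1)) / ((r * s - 1) ^ 2) := by
    unfold Phi PhiTilde gfun
    rw [if_neg hrs, if_neg (not_or.2 ⟨hr1, hr2⟩), if_neg (not_or.2 ⟨hs1, hs2⟩), hlog]
    field_simp
    ring
  by_cases heq : r = s
  · subst heq
    have h0 : PhiTilde r + PhiTilde r - Phi (r * r) = 0 := by
      rw [hd]; ring
    constructor
    · linarith
    · exact ⟨fun _ => rfl, fun _ => by linarith⟩
  · have hE := keyE hr1 hr2 hs1 hs2 hrs heq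
    have hD : 0 < PhiTilde r + PhiTilde s - Phi (r * s) := by
      rw [hd]
      exact div_pos hE (by positivity)
    constructor
    · linarith
    · constructor
      · intro h; linarith
      · intro h; exact absurd h heq
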